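/- Let w be a tms of degree 2k and suppose the truncation w|_{2t} is flat for some 0 < t ≤ k, M_k(w) ⪰ 0, and ker M_k(w) ⊆ I(S) for some set S ⊆ ℝⁿ. Then for every α with |α| ≥ t there exists a polynomial ψ_α of degree ≤ t−1 with x^α ≡ ψ_α mod I(S); consequently the quotient ring ℝ[x]/I(S) is finite-dimensional and S is a finite set. -/

import Mathlib

open MvPolynomial

/-- Total degree of a multi-index. -/
def mdeg {n : ℕ} (α : Fin n →₀ ℕ) : ℕ := α.sum fun _ k => k

/-- The Riesz functional of a truncated moment sequence. -/
noncomputable def Riesz {n : ℕ} (y : (Fin n →₀ ℕ) → ℝ) (p : MvPolynomial (Fin n) ℝ) : ℝ :=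
  ∑ α ∈ p.support, coeff α p * y α

/-- `f` belongs to the kernel of the `k`-th moment matrix of the tms `w`. -/
def memKerM {n : ℕ} (w : (Fin n →₀ ℕ) → ℝ) (k : ℕ) (f : MvPolynomial (Fin n) ℝ) : Prop :=
  f.totalDegree ≤ k ∧ ∀ β : Fin n →₀ ℕ, mdeg β ≤ k → Riesz w (f * monomial β 1) = 0

section lems
variable {n : ℕ} (w : (Fin n →₀ ℕ) → ℝ)

lemma Riesz_eq_sum {p : MvPolynomial (Fin n) ℝ} {D : Finset (Fin n →₀ ℕ)}
    (h : p.support ⊆ D) : Riesz w p = ∑ α ∈ D, coeff α p * w α := by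
  rw [Riesz]
  refine Finset.sum_subset h fun α _ hα => ?_
  simp [MvPolynomial.notMem_support_iff.mp hα]

lemma Riesz_zero : Riesz w 0 = 0 := by simp [Riesz]

lemma Riesz_add (p q : MvPolynomial (Fin n) ℝ) :
    Riesz w (p + q) = Riesz w p + Riesz w q := by
  rw [Riesz_eq_sum w (p := p + q) (D := p.support ∪ q.support)
      (MvPolynomial.support_add),
    Riesz_eq_sum w (p := p) (D := p.support ∪ q.support) Finset.subset_union_left,
    Riesz_eq_sum w (p := q) (D := p.support ∪ q.support) Finset.subset_union_right,
    ← Finset.sum_add_distrib]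
  simp [coeff_add, add_mul]

lemma Riesz_smul (c : ℝ) (p : MvPolynomial (Fin n) ℝ) :
    Riesz w (c • p) = c * Riesz w p := by
  rw [Riesz_eq_sum w (p := c • p) (D := p.support) (MvPolynomial.support_smul),
    Riesz, Finset.mul_sum]
  simp [coeff_smul, mul_assoc]

lemma Riesz_sum {ι : Type*} (s : Finset ι) (F : ι → MvPolynomial (Fin n) ℝ) :
    Riesz w (∑ i ∈ s, F i) = ∑ i ∈ s, Riesz w (F i) := by
  classical
  induction s using Finset.induction with
  | empty => simp [Riesz_zero]
  | insert _ _ h ih => rw [Finset.sum_insert h, Riesz_add, ih, Finset.sum_insert h]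

lemma Riesz_mul_right (f g : MvPolynomial (Fin n) ℝ) :
    Riesz w (f * g) = ∑ β ∈ g.support, coeff β g * Riesz w (f * monomial β 1) := by
  conv_lhs => rw [g.as_sum, Finset.mul_sum]
  rw [Riesz_sum]
  refine Finset.sum_congr rfl fun β _ => ?_
  have : monomial β (coeff β g) = (coeff β g) • monomial β 1 := by
    rw [smul_eq_C_mul, C_mul_monomial, mul_one]
  rw [this, mul_smul_comm, Riesz_smul]
end lems

section lift
variable {n : ℕ} {w : (Fin n →₀ ℕ) → ℝ}

lemma kerM_lift {k t : ℕ} (htk : t ≤ k)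
    (hpsd : ∀ p : MvPolynomial (Fin n) ℝ, p.totalDegree ≤ k → 0 ≤ Riesz w (p ^ 2))
    (f : MvPolynomial (Fin n) ℝ) (hf : memKerM w t f) : memKerM w k f := by
  obtain ⟨hdeg, hz⟩ := hf
  refine ⟨hdeg.trans htk, fun β hβ => ?_⟩
  have hff : Riesz w (f * f) = 0 := by
    rw [Riesz_mul_right]
    refine Finset.sum_eq_zero fun γ hγ => ?_
    rw [hz γ ((le_totalDegree hγ).trans hdeg), mul_zero]
  set m : MvPolynomial (Fin n) ℝ := monomial β 1 with hm
  set c := Riesz w (f * m) with hc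
  set d := Riesz w (m * m) with hd
  have hdm : m.totalDegree ≤ k := by
    rw [hm, totalDegree_monomial _ one_ne_zero]; exact hβ
  have hdpos : 0 ≤ d := by
    have := hpsd m hdm; rwa [sq] at this
  have key : ∀ l : ℝ, 0 ≤ 2 * l * c + l * l * d := by
    intro l
    have hdeg2 : (f + l • m).totalDegree ≤ k :=
      le_trans (totalDegree_add _ _)
        (max_le (hdeg.trans htk) ((totalDegree_smul_le _ _).trans hdm))
    have h0 := hpsd _ hdeg2
    have hexp : (f + l • m)^2 = f * f + ((2*l) • (f * m) + (l*l) • (m * m)) := by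
      rw [smul_eq_C_mul, smul_eq_C_mul, smul_eq_C_mul]
      simp only [map_mul, map_ofNat]
      ring
    rw [hexp, Riesz_add, Riesz_add, Riesz_smul, Riesz_smul, hff, zero_add] at h0
    linarith [h0]
  have hd1 : (0:ℝ) < d + 1 := by linarith
  have h2 := key (-c / (d+1))
  have hc2 : c ^ 2 ≤ 0 := by
    have hne : (d + 1) ≠ 0 := ne_of_gt hd1
    have h3 : 2 * (-c / (d+1)) * c + (-c / (d+1)) * (-c / (d+1)) * d
        = (-2 * c^2 * (d+1) + c^2 * d) / ((d+1)*(d+1)) := by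
      field_simp
    rw [h3, le_div_iff₀ (by positivity)] at h2
    nlinarith [h2, hdpos, sq_nonneg c]
  have : c ^ 2 = 0 := le_antisymm hc2 (sq_nonneg c)
  exact pow_eq_zero_iff two_ne_zero |>.mp this

end lift

section reduce
variable {n k t : ℕ} {w : (Fin n →₀ ℕ) → ℝ} {S : Set (Fin n → ℝ)}

lemma mdeg_add (a b : Fin n →₀ ℕ) : mdeg (a + b) = mdeg a + mdeg b := by
  simp [mdeg, Finsupp.sum_add_index']

lemma mdeg_single (i : Fin n) : mdeg (Finsupp.single i 1) = 1 := by
  simp [mdeg]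

lemma reduce_support (t : ℕ) (S : Set (Fin n → ℝ)) (p : MvPolynomial (Fin n) ℝ)
    (h : ∀ γ ∈ p.support, ∃ ψ : MvPolynomial (Fin n) ℝ, ψ.totalDegree ≤ t ∧
      ∀ x ∈ S, eval x (monomial γ 1) = eval x ψ) :
    ∃ ψ : MvPolynomial (Fin n) ℝ, ψ.totalDegree ≤ t ∧ ∀ x ∈ S, eval x p = eval x ψ := by
  classical
  choose Ψ hΨd hΨe using h
  refine ⟨∑ γ ∈ p.support.attach, coeff γ.1 p • Ψ γ.1 γ.2, ?_, ?_⟩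
  · refine (totalDegree_finset_sum _ _).trans (Finset.sup_le fun γ _ => ?_)
    exact (totalDegree_smul_le _ _).trans (hΨd γ.1 γ.2)
  · intro x hx
    conv_lhs => rw [p.as_sum]
    rw [← Finset.sum_attach p.support (fun γ => monomial γ (coeff γ p)), map_sum, map_sum]
    refine Finset.sum_congr rfl fun γ _ => ?_
    have h1 : monomial γ.1 (coeff γ.1 p) = coeff γ.1 p • monomial γ.1 1 := by
      rw [smul_eq_C_mul, C_mul_monomial, mul_one]
    rw [h1, smul_eq_C_mul, smul_eq_C_mul, map_mul, map_mul, eval_C,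
      hΨe γ.1 γ.2 x hx]

lemma reduce_monomial (ht0 : 0 < t) (htk : t ≤ k)
    (hpsd : ∀ p : MvPolynomial (Fin n) ℝ, p.totalDegree ≤ k → 0 ≤ Riesz w (p ^ 2))
    (hflat : ∀ α : Fin n →₀ ℕ, mdeg α = t → ∃ φ : MvPolynomial (Fin n) ℝ,
      φ.totalDegree ≤ t - 1 ∧ memKerM w t (monomial α 1 - φ))
    (hker : ∀ f : MvPolynomial (Fin n) ℝ, memKerM w k f → ∀ x ∈ S, eval x f = 0) :
    ∀ α : Fin n →₀ ℕ, ∃ ψ : MvPolynomial (Fin n) ℝ,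
      ψ.totalDegree ≤ t - 1 ∧ ∀ x ∈ S, eval x (monomial α 1) = eval x ψ := by
  suffices H : ∀ d : ℕ, ∀ α : Fin n →₀ ℕ, mdeg α ≤ d →
      ∃ ψ : MvPolynomial (Fin n) ℝ, ψ.totalDegree ≤ t - 1 ∧
        ∀ x ∈ S, eval x (monomial α 1) = eval x ψ from fun α => H (mdeg α) α le_rfl
  intro d
  induction d using Nat.strong_induction_on with
  | _ d ih =>
  intro α hα
  rcases le_or_gt (mdeg α) (t-1) with hle | hgt
  · exact ⟨monomial α 1, by rw [totalDegree_monomial _ one_ne_zero]; exact hle,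
      fun x _ => rfl⟩
  have htle : t ≤ mdeg α := by omega
  rcases eq_or_lt_of_le htle with heq | hlt
  · obtain ⟨φ, hφd, hφk⟩ := hflat α heq.symm
    refine ⟨φ, hφd, fun x hx => ?_⟩
    have h0 := hker _ (kerM_lift htk hpsd _ hφk) x hx
    rw [map_sub] at h0
    linarith [h0]
  · have h1 : ∃ i, α i ≠ 0 := by
      by_contra h; push_neg at h
      have hz : α = 0 := Finsupp.ext fun i => h i
      rw [hz] at hlt
      simp [mdeg] at hlt
    obtain ⟨i, hi⟩ := h1
    set α' := α - Finsupp.single i 1 with hα'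
    have hle1 : Finsupp.single i 1 ≤ α := Finsupp.single_le_iff.mpr (by omega)
    have hsplit : α = α' + Finsupp.single i 1 := (tsub_add_cancel_of_le hle1).symm
    have hmd : mdeg α = mdeg α' + 1 := by rw [hsplit, mdeg_add, mdeg_single]
    have hd0 : t < d := lt_of_lt_of_le hlt hα
    obtain ⟨ψ', hψ'd, hψ'e⟩ := ih (d-1) (by omega) α' (by omega)
    set q := (monomial (Finsupp.single i 1) (1:ℝ)) * ψ' with hq
    have hqd : q.totalDegree ≤ t := by
      refine (totalDegree_mul _ _).trans ?_
      rw [totalDegree_monomial _ one_ne_zero]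
      have h2 : mdeg (Finsupp.single i 1) = 1 := mdeg_single i
      have h3 : (Finsupp.single i 1).sum (fun _ e => e) = 1 := h2
      omega
    obtain ⟨ψ, hψd, hψe⟩ := reduce_support (t-1) S q (fun γ hγ => by
      have h4 : mdeg γ ≤ q.totalDegree := le_totalDegree hγ
      exact ih (d-1) (by omega) γ (by omega))
    refine ⟨ψ, hψd, fun x hx => ?_⟩
    have h5 : eval x (monomial α 1) = eval x q := by
      rw [hsplit, show monomial (α' + Finsupp.single i 1) (1:ℝ)
          = monomial (Finsupp.single i 1) 1 * monomial α' 1 from by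
            rw [monomial_mul, one_mul, add_comm],
        hq, map_mul, map_mul, hψ'e x hx]
    rw [h5, hψe x hx]

end reduce

/-- Let `w` be a tms of degree `2k` whose truncation `w|_{2t}` is flat for some
`0 < t ≤ k` (every monomial of degree `t` is congruent, modulo `ker M_t(w)`, to a
polynomial of degree ≤ t−1), with `M_k(w) ⪰ 0` and `ker M_k(w) ⊆ I(S)`. Then every
monomial `x^α` with `|α| ≥ t` is congruent mod `I(S)` to a polynomial of degree ≤ t−1,
and consequently `S` is finite. -/
theorem flat_truncation_finite_variety {n k t : ℕ} (ht0 : 0 < t) (htk : t ≤ k)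
    (w : (Fin n →₀ ℕ) → ℝ) (S : Set (Fin n → ℝ))
    (hpsd : ∀ p : MvPolynomial (Fin n) ℝ, p.totalDegree ≤ k → 0 ≤ Riesz w (p ^ 2))
    (hflat : ∀ α : Fin n →₀ ℕ, mdeg α = t → ∃ φ : MvPolynomial (Fin n) ℝ,
      φ.totalDegree ≤ t - 1 ∧ memKerM w t (monomial α 1 - φ))
    (hker : ∀ f : MvPolynomial (Fin n) ℝ, memKerM w k f → ∀ x ∈ S, eval x f = 0) :
    (∀ α : Fin n →₀ ℕ, t ≤ mdeg α → ∃ ψ : MvPolynomial (Fin n) ℝ,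
      ψ.totalDegree ≤ t - 1 ∧ ∀ x ∈ S, eval x (monomial α 1) = eval x ψ) ∧
    S.Finite := by
  classical
  have hred : ∀ p : MvPolynomial (Fin n) ℝ, ∃ ψ : MvPolynomial (Fin n) ℝ,
      ψ.totalDegree ≤ t - 1 ∧ ∀ x ∈ S, eval x p = eval x ψ :=
    fun p => reduce_support (t-1) S p
      (fun γ _ => reduce_monomial ht0 htk hpsd hflat hker γ)
  refine ⟨fun α _ => reduce_monomial ht0 htk hpsd hflat hker α, ?_⟩
  set V := restrictTotalDegree (Fin n) ℝ (t-1) with hV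
  let L : (Fin n → ℝ) → (V →ₗ[ℝ] ℝ) := fun x =>
    { toFun := fun q => eval x q.1
      map_add' := fun a b => by simp
      map_smul' := fun c a => by simp [smul_eq_C_mul] }
  have hLI : LinearIndependent ℝ (fun x : S => L x.1) := by
    rw [linearIndependent_iff']
    intro s g hsum j hj
    have hinj : Function.Injective (fun x : S =>
        ((eval x.1 : MvPolynomial (Fin n) ℝ →+* ℝ) :
          MvPolynomial (Fin n) ℝ →* ℝ)) := by
      intro x y hxy
      have hcoord : ∀ i, x.1 i = y.1 i := by
        intro i
        have h6 := congrArg (fun f : MvPolynomial (Fin n) ℝ →* ℝ => f (X i)) hxy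
        simpa using h6
      exact Subtype.ext (funext hcoord)
    have hLI' := (linearIndependent_monoidHom (MvPolynomial (Fin n) ℝ) ℝ).comp _ hinj
    refine linearIndependent_iff'.mp hLI' s g ?_ j hj
    funext p
    obtain ⟨ψ, hψd, hψe⟩ := hred p
    have hmem : ψ ∈ V := (mem_restrictTotalDegree _ _ _).mpr hψd
    have happ := congrArg (fun F : V →ₗ[ℝ] ℝ => F ⟨ψ, hmem⟩) hsum
    simp only [LinearMap.coe_sum, Finset.sum_apply, LinearMap.smul_apply,
      LinearMap.zero_apply, smul_eq_mul] at happ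
    simp only [Finset.sum_apply, Pi.smul_apply, Pi.zero_apply, smul_eq_mul,
      Function.comp_apply, MonoidHom.coe_coe, RingHom.coe_coe]
    calc ∑ i ∈ s, g i * eval i.1 p = ∑ i ∈ s, g i * eval i.1 ψ := by
          refine Finset.sum_congr rfl fun i _ => ?_
          rw [hψe i.1 i.2]
      _ = 0 := happ
  have hfin : Finite S := hLI.finite
  exact Set.finite_coe_iff.mp hfin
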